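/- If f is continuous on [0,r_1] with f(r) = O(r^n) as r → 0⁺, then F[f](r) = O(r^{n+2}) as r → 0⁺, where F[f](r) = r^n ∫_0^r x^{-(2n+1)} (∫_0^x y^{n+1} f(y) dy) dx. -/

import Mathlib

open MeasureTheory intervalIntegral Set

/-- The integral operator `F[f](r) = r^n ∫_0^r x^{-(2n+1)} (∫_0^x y^{n+1} f(y) dy) dx`. -/
noncomputable def graetzF (n : ℕ) (f : ℝ → ℝ) : ℝ → ℝ :=
  fun r => r ^ n * ∫ x in (0:ℝ)..r, (x ^ (2 * n + 1))⁻¹ * ∫ y in (0:ℝ)..x, y ^ (n + 1) * f y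

theorem stmt6 (n : ℕ) (r₁ : ℝ) (hr₁ : 0 < r₁) (f : ℝ → ℝ)
    (hc : ContinuousOn f (Set.Ioc 0 r₁)) (C : ℝ) (hC : 0 < C)
    (hbound : ∀ r ∈ Set.Ioc (0:ℝ) r₁, |f r| ≤ C * r ^ n) :
    ∃ C' > 0, ∀ r ∈ Set.Ioc (0:ℝ) r₁, |graetzF n f r| ≤ C' * r ^ (n + 2) := by
  set g : ℝ → ℝ := fun y => y ^ (n + 1) * f y with hg
  set M : ℝ := C / (2 * n + 2) with hMdef
  have hden : (0:ℝ) < 2 * n + 2 := by positivity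
  have hM : 0 < M := by positivity
  -- pointwise bound on g
  have hgb : ∀ y ∈ Set.Ioc (0:ℝ) r₁, |g y| ≤ C * y ^ (2 * n + 1) := by
    intro y hy
    have hy0 : 0 < y := hy.1
    have : |g y| = y ^ (n + 1) * |f y| := by
      rw [hg, abs_mul, abs_of_nonneg (by positivity)]
    rw [this]
    calc y ^ (n + 1) * |f y| ≤ y ^ (n + 1) * (C * y ^ n) := by
          exact mul_le_mul_of_nonneg_left (hbound y hy) (by positivity)
      _ = C * y ^ (2 * n + 1) := by ring
  -- integrability of g on (0, x] for x ≤ r₁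
  have hgcont : ContinuousOn g (Set.Ioc 0 r₁) :=
    (continuousOn_pow _).mul hc
  have hgint : ∀ x ∈ Set.Icc (0:ℝ) r₁, IntegrableOn g (Set.Ioc 0 x) := by
    intro x hx
    have hsub : Set.Ioc (0:ℝ) x ⊆ Set.Ioc 0 r₁ := Set.Ioc_subset_Ioc le_rfl hx.2
    have hmeas : AEStronglyMeasurable g (volume.restrict (Set.Ioc (0:ℝ) x)) :=
      (hgcont.mono hsub).aestronglyMeasurable measurableSet_Ioc
    refine Integrable.mono' (g := fun y => C * y ^ (2 * n + 1)) ?_ hmeas ?_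
    · exact (Continuous.integrableOn_Ioc (by continuity))
    · filter_upwards [ae_restrict_mem measurableSet_Ioc] with y hy
      exact hgb y (hsub hy)
  have hgii : ∀ x ∈ Set.Icc (0:ℝ) r₁, IntervalIntegrable g volume 0 x := by
    intro x hx
    rw [intervalIntegrable_iff, Set.uIoc_of_le hx.1]
    exact hgint x hx
  -- bound on the inner integral
  have hinner : ∀ x ∈ Set.Ioc (0:ℝ) r₁, |∫ y in (0:ℝ)..x, g y| ≤ M * x ^ (2 * n + 2) := by
    intro x hx
    have hx0 : (0:ℝ) ≤ x := hx.1.le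
    have hb : IntervalIntegrable (fun y => C * y ^ (2 * n + 1)) volume 0 x :=
      (Continuous.intervalIntegrable (by continuity) _ _)
    have h1 : |∫ y in (0:ℝ)..x, g y| ≤ |∫ y in (0:ℝ)..x, C * y ^ (2 * n + 1)| := by
      rw [← Real.norm_eq_abs (∫ y in (0:ℝ)..x, g y)]
      refine intervalIntegral.norm_integral_le_abs_of_norm_le ?_ hb
      filter_upwards [ae_restrict_mem measurableSet_uIoc] with y hy
      rw [Set.uIoc_of_le hx0] at hy
      simpa using hgb y (Set.Ioc_subset_Ioc le_rfl hx.2 hy)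
    have h2 : ∫ y in (0:ℝ)..x, C * y ^ (2 * n + 1) = M * x ^ (2 * n + 2) := by
      rw [intervalIntegral.integral_const_mul C (fun y => y ^ (2*n+1)), integral_pow, hMdef]
      have : ((2 * n + 1 : ℕ) : ℝ) + 1 = 2 * n + 2 := by push_cast; ring
      rw [this]
      rw [zero_pow (by omega)]
      field_simp
      ring
    calc |∫ y in (0:ℝ)..x, g y| ≤ |∫ y in (0:ℝ)..x, C * y ^ (2 * n + 1)| := h1
      _ = M * x ^ (2 * n + 2) := by
          rw [h2]; exact abs_of_nonneg (by positivity)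
  -- the outer integrand
  set h : ℝ → ℝ := fun x => (x ^ (2 * n + 1))⁻¹ * ∫ y in (0:ℝ)..x, g y with hh
  have hhb : ∀ x ∈ Set.Ioc (0:ℝ) r₁, |h x| ≤ M * x := by
    intro x hx
    have hx0 : 0 < x := hx.1
    have : |h x| = (x ^ (2 * n + 1))⁻¹ * |∫ y in (0:ℝ)..x, g y| := by
      rw [hh, abs_mul, abs_of_nonneg (by positivity)]
    rw [this]
    calc (x ^ (2 * n + 1))⁻¹ * |∫ y in (0:ℝ)..x, g y|
        ≤ (x ^ (2 * n + 1))⁻¹ * (M * x ^ (2 * n + 2)) :=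
          mul_le_mul_of_nonneg_left (hinner x hx) (by positivity)
      _ = M * x := by
          field_simp
          ring
  -- continuity of h on Ioc 0 r₁
  have hprim : ContinuousOn (fun x => ∫ y in (0:ℝ)..x, g y) (Set.Icc 0 r₁) := by
    have : IntegrableOn g (Set.uIcc 0 r₁) := by
      rw [Set.uIcc_of_le hr₁.le, integrableOn_Icc_iff_integrableOn_Ioc]
      exact hgint r₁ (Set.right_mem_Icc.mpr hr₁.le)
    simpa [Set.uIcc_of_le hr₁.le] using intervalIntegral.continuousOn_primitive_interval this
  have hhcont : ContinuousOn h (Set.Ioc 0 r₁) := by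
    apply ContinuousOn.mul
    · apply ContinuousOn.inv₀ (continuousOn_pow _)
      intro x hx
      exact pow_ne_zero _ (ne_of_gt hx.1)
    · exact hprim.mono Set.Ioc_subset_Icc_self
  refine ⟨M / 2, by positivity, ?_⟩
  intro r hr
  have hr0 : 0 < r := hr.1
  have hsub : Set.Ioc (0:ℝ) r ⊆ Set.Ioc 0 r₁ := Set.Ioc_subset_Ioc le_rfl hr.2
  -- integrability of h on (0, r]
  have hhint : IntervalIntegrable h volume 0 r := by
    rw [intervalIntegrable_iff, Set.uIoc_of_le hr0.le]
    have hmeas : AEStronglyMeasurable h (volume.restrict (Set.Ioc (0:ℝ) r)) :=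
      (hhcont.mono hsub).aestronglyMeasurable measurableSet_Ioc
    refine Integrable.mono' (g := fun x => M * x) ?_ hmeas ?_
    · exact ((continuous_const.mul continuous_id).integrableOn_Ioc)
    · filter_upwards [ae_restrict_mem measurableSet_Ioc] with x hx
      exact hhb x (hsub hx)
  have hbint : IntervalIntegrable (fun x => M * x) volume 0 r :=
    (Continuous.intervalIntegrable (continuous_const.mul continuous_id) _ _)
  have houter : |∫ x in (0:ℝ)..r, h x| ≤ M / 2 * r ^ 2 := by
    have h1 : |∫ x in (0:ℝ)..r, h x| ≤ |∫ x in (0:ℝ)..r, M * x| := by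
      rw [← Real.norm_eq_abs (∫ x in (0:ℝ)..r, h x)]
      refine intervalIntegral.norm_integral_le_abs_of_norm_le ?_ hbint
      filter_upwards [ae_restrict_mem measurableSet_uIoc] with x hx
      rw [Set.uIoc_of_le hr0.le] at hx
      simpa using hhb x (hsub hx)
    have h2 : ∫ x in (0:ℝ)..r, M * x = M / 2 * r ^ 2 := by
      rw [intervalIntegral.integral_const_mul M (fun x => x), integral_id]
      ring
    calc |∫ x in (0:ℝ)..r, h x| ≤ |∫ x in (0:ℝ)..r, M * x| := h1
      _ = M / 2 * r ^ 2 := by rw [h2]; exact abs_of_nonneg (by positivity)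
  have : |graetzF n f r| = r ^ n * |∫ x in (0:ℝ)..r, h x| := by
    rw [graetzF, abs_mul, abs_of_nonneg (by positivity)]
  rw [this]
  calc r ^ n * |∫ x in (0:ℝ)..r, h x| ≤ r ^ n * (M / 2 * r ^ 2) :=
        mul_le_mul_of_nonneg_left houter (by positivity)
    _ = M / 2 * r ^ (n + 2) := by ring
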